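/- Let J_n be the set of triples (A,B,C) of balanced up-down paths with n total up steps such that either (B ends with a down step, C is nonempty and lies entirely weakly below the horizontal axis) or (B ends with an up step, C is nonempty and lies entirely weakly above the horizontal axis). Let I_n be the set of triples (A,B,C) with B empty and C having both a point strictly above and a point strictly below the horizontal axis. Then |J_n| = |I_n|. -/

import Mathlib

/-- An up-down lattice path, encoded as a `List Bool` with `true` = up step
`(1,1)` and `false` = down step `(1,-1)`. -/
abbrev UDPath := List Bool

/-- The path is balanced: equally many up and down steps. -/
def IsBalanced (w : UDPath) : Prop := w.count true = w.count false

/-- Some lattice point of the path is strictly above its starting height. -/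
def HasPointAbove (w : UDPath) : Prop :=
  ∃ t, t ≤ w.length ∧ (w.take t).count false < (w.take t).count true

/-- Some lattice point of the path is strictly below its starting height. -/
def HasPointBelow (w : UDPath) : Prop :=
  ∃ t, t ≤ w.length ∧ (w.take t).count true < (w.take t).count false

/-- Every lattice point of the path is weakly below its starting height. -/
def WeaklyBelow (w : UDPath) : Prop :=
  ∀ t, t ≤ w.length → (w.take t).count true ≤ (w.take t).count false

/-- Every lattice point of the path is weakly above its starting height. -/
def WeaklyAbove (w : UDPath) : Prop :=
  ∀ t, t ≤ w.length → (w.take t).count false ≤ (w.take t).count true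

namespace CS

def ht (w : UDPath) (t : ℕ) : ℤ :=
  ((w.take t).count true : ℤ) - ((w.take t).count false : ℤ)

lemma ht_zero (w : UDPath) : ht w 0 = 0 := by simp [ht]

lemma balanced_iff (w : UDPath) : IsBalanced w ↔ ht w w.length = 0 := by
  simp only [IsBalanced, ht, List.take_length, sub_eq_zero]
  exact ⟨fun h => by exact_mod_cast h, fun h => by exact_mod_cast h⟩

lemma weaklyBelow_iff (w : UDPath) : WeaklyBelow w ↔ ∀ t, t ≤ w.length → ht w t ≤ 0 := by
  unfold WeaklyBelow ht
  constructor
  · intro h t htt; have := h t htt; omega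
  · intro h t htt; have := h t htt; omega

lemma weaklyAbove_iff (w : UDPath) : WeaklyAbove w ↔ ∀ t, t ≤ w.length → 0 ≤ ht w t := by
  unfold WeaklyAbove ht
  constructor
  · intro h t htt; have := h t htt; omega
  · intro h t htt; have := h t htt; omega

lemma hasPointAbove_iff (w : UDPath) : HasPointAbove w ↔ ∃ t, t ≤ w.length ∧ 0 < ht w t := by
  unfold HasPointAbove ht
  constructor
  · rintro ⟨t, h1, h2⟩; exact ⟨t, h1, by omega⟩
  · rintro ⟨t, h1, h2⟩; exact ⟨t, h1, by omega⟩

lemma hasPointBelow_iff (w : UDPath) : HasPointBelow w ↔ ∃ t, t ≤ w.length ∧ ht w t < 0 := by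
  unfold HasPointBelow ht
  constructor
  · rintro ⟨t, h1, h2⟩; exact ⟨t, h1, by omega⟩
  · rintro ⟨t, h1, h2⟩; exact ⟨t, h1, by omega⟩

lemma ht_succ {w : UDPath} {t : ℕ} {b : Bool} (h : w[t]? = some b) :
    ht w (t+1) = ht w t + (if b then 1 else -1) := by
  unfold ht
  rw [List.take_succ, h]
  cases b <;> simp [List.count_append] <;> push_cast <;> ring

lemma ht_append (B C : UDPath) (t : ℕ) :
    ht (B ++ C) (B.length + t) = ht B B.length + ht C t := by
  unfold ht
  rw [show (B ++ C).take (B.length + t) = B ++ C.take t by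
    simp [List.take_append]]
  simp [List.count_append, List.take_length]
  push_cast; ring

lemma ht_append_left {B : UDPath} (C : UDPath) {t : ℕ} (h : t ≤ B.length) :
    ht (B ++ C) t = ht B t := by
  unfold ht
  rw [List.take_append_of_le_length h]

lemma ht_take {w : UDPath} {s t : ℕ} (h : t ≤ s) : ht (w.take s) t = ht w t := by
  unfold ht
  rw [List.take_take, min_eq_left h]

lemma count_true_map_not (l : UDPath) : (l.map not).count true = l.count false := by
  rw [show (true : Bool) = not false by rfl, List.count_map_of_injective]
  intro a b; cases a <;> cases b <;> simp

lemma count_false_map_not (l : UDPath) : (l.map not).count false = l.count true := by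
  rw [show (false : Bool) = not true by rfl, List.count_map_of_injective]
  intro a b; cases a <;> cases b <;> simp

lemma ht_map_not (w : UDPath) (t : ℕ) : ht (w.map not) t = - ht w t := by
  unfold ht
  rw [← List.map_take, count_true_map_not, count_false_map_not]
  ring

lemma map_not_map_not (l : UDPath) : (l.map not).map not = l := by
  rw [List.map_map]
  have : (not ∘ not) = id := by funext a; cases a <;> rfl
  rw [this, List.map_id]

lemma balanced_map_not {w : UDPath} (h : IsBalanced w) : IsBalanced (w.map not) := by
  unfold IsBalanced at *
  rw [count_true_map_not, count_false_map_not, h]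

/-- A balanced path ending in a down step is at height 1 just before the end. -/
lemma ht_pred_of_last_false {B : UDPath} (hbal : IsBalanced B) (h : B.getLast? = some false) :
    B ≠ [] ∧ ht B (B.length - 1) = 1 := by
  have hne : B ≠ [] := by rintro rfl; simp at h
  have hlen : 0 < B.length := List.length_pos_iff.mpr hne
  have hget : B[B.length - 1]? = some false := by
    rw [← List.getLast?_eq_getElem?]; exact h
  have := ht_succ hget
  rw [show B.length - 1 + 1 = B.length by omega] at this
  have h0 : ht B B.length = 0 := (balanced_iff B).mp hbal
  simp at this
  constructor
  · exact hne
  · omega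

lemma ht_pred_of_last_true {B : UDPath} (hbal : IsBalanced B) (h : B.getLast? = some true) :
    B ≠ [] ∧ ht B (B.length - 1) = -1 := by
  have hne : B ≠ [] := by rintro rfl; simp at h
  have hlen : 0 < B.length := List.length_pos_iff.mpr hne
  have hget : B[B.length - 1]? = some true := by
    rw [← List.getLast?_eq_getElem?]; exact h
  have := ht_succ hget
  rw [show B.length - 1 + 1 = B.length by omega] at this
  have h0 : ht B B.length = 0 := (balanced_iff B).mp hbal
  simp at this
  constructor
  · exact hne
  · omega

/-- A nonempty balanced weakly-below path ends with an up step. -/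
lemma last_of_weaklyBelow {C : UDPath} (hbal : IsBalanced C) (hne : C ≠ [])
    (hwb : WeaklyBelow C) : C.getLast? = some true := by
  obtain ⟨b, hb⟩ : ∃ b, C.getLast? = some b := by
    cases hl : C.getLast? with
    | none => exact absurd (List.getLast?_eq_none_iff.mp hl) hne
    | some b => exact ⟨b, rfl⟩
  cases b
  · obtain ⟨-, h1⟩ := ht_pred_of_last_false hbal hb
    have := (weaklyBelow_iff C).mp hwb (C.length - 1) (by omega)
    omega
  · exact hb

lemma last_of_weaklyAbove {C : UDPath} (hbal : IsBalanced C) (hne : C ≠ [])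
    (hwa : WeaklyAbove C) : C.getLast? = some false := by
  obtain ⟨b, hb⟩ : ∃ b, C.getLast? = some b := by
    cases hl : C.getLast? with
    | none => exact absurd (List.getLast?_eq_none_iff.mp hl) hne
    | some b => exact ⟨b, rfl⟩
  cases b
  · exact hb
  · obtain ⟨-, h1⟩ := ht_pred_of_last_true hbal hb
    have := (weaklyAbove_iff C).mp hwa (C.length - 1) (by omega)
    omega

/-- First step of a nonempty weakly-below path is down: height -1 after one step. -/
lemma ht_one_of_weaklyBelow {C : UDPath} (hne : C ≠ []) (hwb : WeaklyBelow C) :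
    ht C 1 = -1 := by
  have hlen : 0 < C.length := List.length_pos_iff.mpr hne
  have hget : C[0]? = some C[0] := List.getElem?_eq_getElem hlen
  have hstep := ht_succ hget
  rw [ht_zero] at hstep
  have hle := (weaklyBelow_iff C).mp hwb 1 hlen
  cases hC0 : C[0]
  · rw [hC0] at hstep; simpa using hstep
  · rw [hC0] at hstep; simp at hstep; omega

lemma ht_one_of_weaklyAbove {C : UDPath} (hne : C ≠ []) (hwa : WeaklyAbove C) :
    ht C 1 = 1 := by
  have hlen : 0 < C.length := List.length_pos_iff.mpr hne
  have hget : C[0]? = some C[0] := List.getElem?_eq_getElem hlen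
  have hstep := ht_succ hget
  rw [ht_zero] at hstep
  have hle := (weaklyAbove_iff C).mp hwa 1 hlen
  cases hC0 : C[0]
  · rw [hC0] at hstep; simp at hstep; omega
  · rw [hC0] at hstep; simpa using hstep


/-- Uniqueness of the split point (down-ending-B case). -/
lemma split_unique {D : UDPath} {s s' : ℕ}
    (h2 : s ≤ D.length) (h3 : 0 < ht D (s-1))
    (h4 : ∀ t, s ≤ t → t ≤ D.length → ht D t ≤ 0)
    (h2' : s' ≤ D.length) (h3' : 0 < ht D (s'-1))
    (h4' : ∀ t, s' ≤ t → t ≤ D.length → ht D t ≤ 0) : s = s' := by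
  have hs : 0 < s := by
    by_contra h
    have h0 : s = 0 := by omega
    rw [h0] at h3; simp [ht_zero] at h3
  have hs' : 0 < s' := by
    by_contra h
    have h0 : s' = 0 := by omega
    rw [h0] at h3'; simp [ht_zero] at h3'
  by_contra h
  rcases Nat.lt_or_ge s s' with hlt | hge
  · have := h4 (s'-1) (by omega) (by omega); omega
  · have := h4' (s-1) (by omega) (by omega); omega

lemma split_unique' {D : UDPath} {s s' : ℕ}
    (h2 : s ≤ D.length) (h3 : ht D (s-1) < 0)
    (h4 : ∀ t, s ≤ t → t ≤ D.length → 0 ≤ ht D t)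
    (h2' : s' ≤ D.length) (h3' : ht D (s'-1) < 0)
    (h4' : ∀ t, s' ≤ t → t ≤ D.length → 0 ≤ ht D t) : s = s' := by
  have hs : 0 < s := by
    by_contra h
    have h0 : s = 0 := by omega
    rw [h0] at h3; simp [ht_zero] at h3
  have hs' : 0 < s' := by
    by_contra h
    have h0 : s' = 0 := by omega
    rw [h0] at h3'; simp [ht_zero] at h3'
  by_contra h
  rcases Nat.lt_or_ge s s' with hlt | hge
  · have := h4 (s'-1) (by omega) (by omega); omega
  · have := h4' (s-1) (by omega) (by omega); omega

/-- Existence of the split for a balanced path ending in an up step that has a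
point strictly above the axis. -/
lemma split_exists {D : UDPath} (hbal : IsBalanced D) (habove : HasPointAbove D)
    (hlastD : D.getLast? = some true) :
    ∃ s, 0 < s ∧ s < D.length ∧ ht D s = 0 ∧ D[s-1]? = some false ∧ 0 < ht D (s-1) ∧
      ∀ t, s ≤ t → t ≤ D.length → ht D t ≤ 0 := by
  classical
  have hQ : ∃ s, ∀ t, s ≤ t → t ≤ D.length → ht D t ≤ 0 := by
    refine ⟨D.length, fun t h1 h2 => ?_⟩
    have : t = D.length := le_antisymm h2 h1
    rw [this, (balanced_iff D).mp hbal]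
  set s := Nat.find hQ with hs_def
  have hQs : ∀ t, s ≤ t → t ≤ D.length → ht D t ≤ 0 := Nat.find_spec hQ
  have hsle : s ≤ D.length := Nat.find_min' hQ (by
    intro t h1 h2
    have : t = D.length := le_antisymm h2 h1
    rw [this, (balanced_iff D).mp hbal])
  have hspos : 0 < s := by
    by_contra h
    have h0 : s = 0 := by omega
    obtain ⟨t, ht1, ht2⟩ := (hasPointAbove_iff D).mp habove
    have := hQs t (by omega) ht1
    omega
  have hnot : ¬ ∀ t, s - 1 ≤ t → t ≤ D.length → ht D t ≤ 0 := Nat.find_min hQ (by omega)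
  push_neg at hnot
  obtain ⟨t0, ht0a, ht0b, ht0c⟩ := hnot
  have ht0eq : t0 = s - 1 := by
    by_contra h
    have := hQs t0 (by omega) ht0b
    omega
  rw [ht0eq] at ht0c
  -- the step at s-1
  have hlt : s - 1 < D.length := by omega
  have hget : D[s-1]? = some D[s-1] := List.getElem?_eq_getElem hlt
  have hstep := ht_succ hget
  rw [show s - 1 + 1 = s by omega] at hstep
  have hhs : ht D s ≤ 0 := hQs s le_rfl hsle
  have hfalse : D[s-1] = false := by
    cases hb : D[s-1]
    · rfl
    · rw [hb] at hstep; simp at hstep; omega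
  rw [hfalse] at hstep hget
  simp at hstep
  have hhs0 : ht D s = 0 := by omega
  -- s < length : the last step of D is up so ht D (len-1) = -1
  obtain ⟨hne, hlast1⟩ := ht_pred_of_last_true hbal hlastD
  have hlenpos : 0 < D.length := List.length_pos_iff.mpr hne
  have hslt : s < D.length := by
    rcases Nat.lt_or_ge s D.length with h | h
    · exact h
    · exfalso
      have : s = D.length := by omega
      rw [this] at ht0c
      omega
  exact ⟨s, hspos, hslt, hhs0, hget, ht0c, hQs⟩

/-- The split as path decomposition, for `D` ending with an up step. -/
lemma exists_split {D : UDPath} (hbal : IsBalanced D) (habove : HasPointAbove D)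
    (hlastD : D.getLast? = some true) :
    ∃ B C : UDPath, D = B ++ C ∧ IsBalanced B ∧ IsBalanced C ∧
      B.getLast? = some false ∧ C ≠ [] ∧ WeaklyBelow C := by
  obtain ⟨s, hspos, hslt, hhs0, hget, hhtp, hQ⟩ := split_exists hbal habove hlastD
  refine ⟨D.take s, D.drop s, (List.take_append_drop s D).symm, ?_, ?_, ?_, ?_, ?_⟩
  · -- B balanced
    rw [balanced_iff]
    rw [List.length_take, min_eq_left (le_of_lt hslt), ht_take le_rfl]
    exact hhs0
  · -- C balanced
    rw [balanced_iff]
    have := ht_append (D.take s) (D.drop s) (D.drop s).length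
    rw [List.take_append_drop] at this
    rw [List.length_take, min_eq_left (le_of_lt hslt)] at this
    rw [List.length_drop] at this ⊢
    rw [show s + (D.length - s) = D.length by omega] at this
    rw [(balanced_iff D).mp hbal] at this
    rw [ht_take le_rfl, hhs0] at this
    omega
  · -- last of B
    have hlenB : (D.take s).length = s := by
      rw [List.length_take, min_eq_left (le_of_lt hslt)]
    rw [List.getLast?_eq_getElem?, hlenB, List.getElem?_take, if_pos (by omega)]
    exact hget
  · -- C nonempty
    intro h
    have := congrArg List.length h
    rw [List.length_drop] at this
    simp at this
    omega
  · -- C weakly below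
    rw [weaklyBelow_iff]
    intro t htle
    rw [List.length_drop] at htle
    have := ht_append (D.take s) (D.drop s) t
    rw [List.take_append_drop] at this
    rw [List.length_take, min_eq_left (le_of_lt hslt), ht_take le_rfl, hhs0] at this
    rw [show (0:ℤ) + ht (D.drop s) t = ht (D.drop s) t by ring] at this
    rw [← this]
    exact hQ (s + t) (by omega) (by omega)

/-- Mirrored split: `D` ending with a down step. -/
lemma exists_split' {D : UDPath} (hbal : IsBalanced D) (hbelow : HasPointBelow D)
    (hlastD : D.getLast? = some false) :
    ∃ B C : UDPath, D = B ++ C ∧ IsBalanced B ∧ IsBalanced C ∧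
      B.getLast? = some true ∧ C ≠ [] ∧ WeaklyAbove C := by
  have hbal' : IsBalanced (D.map not) := balanced_map_not hbal
  have habove' : HasPointAbove (D.map not) := by
    rw [hasPointAbove_iff]
    obtain ⟨t, h1, h2⟩ := (hasPointBelow_iff D).mp hbelow
    exact ⟨t, by simpa using h1, by rw [ht_map_not]; omega⟩
  have hlast' : (D.map not).getLast? = some true := by
    rw [List.getLast?_map, hlastD]; rfl
  obtain ⟨B', C', hsplit, hB', hC', hlastB', hne', hwb'⟩ := exists_split hbal' habove' hlast'
  refine ⟨B'.map not, C'.map not, ?_, balanced_map_not hB', balanced_map_not hC', ?_, ?_, ?_⟩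
  · have := congrArg (List.map not) hsplit
    rw [map_not_map_not, List.map_append] at this
    exact this
  · rw [List.getLast?_map, hlastB']; rfl
  · simpa using hne'
  · rw [weaklyAbove_iff]
    intro t htle
    rw [List.length_map] at htle
    rw [ht_map_not]
    have := (weaklyBelow_iff C').mp hwb' t htle
    omega

/-- Forward properties in the down-ending-`B` case. -/
lemma forward1 {B C : UDPath} (hB : IsBalanced B) (hC : IsBalanced C)
    (hlast : B.getLast? = some false) (hne : C ≠ []) (hwb : WeaklyBelow C) :
    (B++C).getLast? = some true ∧
    B.length ≤ (B++C).length ∧ 0 < ht (B++C) (B.length - 1) ∧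
    (∀ t, B.length ≤ t → t ≤ (B++C).length → ht (B++C) t ≤ 0) ∧
    HasPointAbove (B++C) ∧ HasPointBelow (B++C) := by
  obtain ⟨hBne, hBpred⟩ := ht_pred_of_last_false hB hlast
  have hB0 : ht B B.length = 0 := (balanced_iff B).mp hB
  have hBlen : 0 < B.length := List.length_pos_iff.mpr hBne
  have hClen : 0 < C.length := List.length_pos_iff.mpr hne
  have hlenapp : (B++C).length = B.length + C.length := List.length_append
  have hpred : ht (B++C) (B.length - 1) = 1 := by
    rw [ht_append_left C (by omega)]; exact hBpred
  have hafter : ∀ t, B.length ≤ t → t ≤ (B++C).length → ht (B++C) t ≤ 0 := by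
    intro t h1 h2
    have := ht_append B C (t - B.length)
    rw [show B.length + (t - B.length) = t by omega, hB0] at this
    rw [this]
    have := (weaklyBelow_iff C).mp hwb (t - B.length) (by omega)
    omega
  refine ⟨?_, by omega, by omega, hafter, ?_, ?_⟩
  · rw [List.getLast?_append_of_ne_nil (l₁ := B) hne]
    exact last_of_weaklyBelow hC hne hwb
  · rw [hasPointAbove_iff]
    exact ⟨B.length - 1, by omega, by omega⟩
  · rw [hasPointBelow_iff]
    refine ⟨B.length + 1, by omega, ?_⟩
    have := ht_append B C 1
    rw [hB0, ht_one_of_weaklyBelow hne hwb] at this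
    omega

/-- Forward properties in the up-ending-`B` case. -/
lemma forward2 {B C : UDPath} (hB : IsBalanced B) (hC : IsBalanced C)
    (hlast : B.getLast? = some true) (hne : C ≠ []) (hwa : WeaklyAbove C) :
    (B++C).getLast? = some false ∧
    B.length ≤ (B++C).length ∧ ht (B++C) (B.length - 1) < 0 ∧
    (∀ t, B.length ≤ t → t ≤ (B++C).length → 0 ≤ ht (B++C) t) ∧
    HasPointAbove (B++C) ∧ HasPointBelow (B++C) := by
  obtain ⟨hBne, hBpred⟩ := ht_pred_of_last_true hB hlast
  have hB0 : ht B B.length = 0 := (balanced_iff B).mp hB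
  have hBlen : 0 < B.length := List.length_pos_iff.mpr hBne
  have hClen : 0 < C.length := List.length_pos_iff.mpr hne
  have hlenapp : (B++C).length = B.length + C.length := List.length_append
  have hpred : ht (B++C) (B.length - 1) = -1 := by
    rw [ht_append_left C (by omega)]; exact hBpred
  have hafter : ∀ t, B.length ≤ t → t ≤ (B++C).length → 0 ≤ ht (B++C) t := by
    intro t h1 h2
    have := ht_append B C (t - B.length)
    rw [show B.length + (t - B.length) = t by omega, hB0] at this
    rw [this]
    have := (weaklyAbove_iff C).mp hwa (t - B.length) (by omega)
    omega
  refine ⟨?_, by omega, by omega, hafter, ?_, ?_⟩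
  · rw [List.getLast?_append_of_ne_nil (l₁ := B) hne]
    exact last_of_weaklyAbove hC hne hwa
  · rw [hasPointAbove_iff]
    refine ⟨B.length + 1, by omega, ?_⟩
    have := ht_append B C 1
    rw [hB0, ht_one_of_weaklyAbove hne hwa] at this
    omega
  · rw [hasPointBelow_iff]
    exact ⟨B.length - 1, by omega, by omega⟩

lemma ne_nil_of_above {D : UDPath} (h : HasPointAbove D) : D ≠ [] := by
  rintro rfl
  obtain ⟨t, h1, h2⟩ := h
  simp at h1
  subst h1
  simp at h2

lemma f_mem (n : ℕ) (p : UDPath × UDPath × UDPath)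
    (hp : IsBalanced p.1 ∧ IsBalanced p.2.1 ∧ IsBalanced p.2.2 ∧
        p.1.count true + p.2.1.count true + p.2.2.count true = n ∧
        ((p.2.1.getLast? = some false ∧ p.2.2 ≠ [] ∧ WeaklyBelow p.2.2) ∨
          (p.2.1.getLast? = some true ∧ p.2.2 ≠ [] ∧ WeaklyAbove p.2.2))) :
    IsBalanced p.1 ∧ IsBalanced ([] : UDPath) ∧ IsBalanced (p.2.1 ++ p.2.2) ∧
        p.1.count true + ([] : UDPath).count true + (p.2.1 ++ p.2.2).count true = n ∧
        ([] : UDPath) = [] ∧ HasPointAbove (p.2.1 ++ p.2.2) ∧ HasPointBelow (p.2.1 ++ p.2.2) := by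
  obtain ⟨hA, hB, hC, hcnt, hcase⟩ := hp
  have hbalD : IsBalanced (p.2.1 ++ p.2.2) := by
    unfold IsBalanced at *
    simp only [List.count_append]
    omega
  have hcnt' : p.1.count true + ([] : UDPath).count true + (p.2.1 ++ p.2.2).count true = n := by
    simp only [List.count_append, List.count_nil]
    omega
  rcases hcase with ⟨h1, h2, h3⟩ | ⟨h1, h2, h3⟩
  · obtain ⟨-, -, -, -, ha, hb⟩ := forward1 hB hC h1 h2 h3
    exact ⟨hA, rfl, hbalD, hcnt', rfl, ha, hb⟩
  · obtain ⟨-, -, -, -, ha, hb⟩ := forward2 hB hC h1 h2 h3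
    exact ⟨hA, rfl, hbalD, hcnt', rfl, ha, hb⟩

end CS

theorem correction_step_count (n : ℕ) :
    Nat.card {p : UDPath × UDPath × UDPath //
        IsBalanced p.1 ∧ IsBalanced p.2.1 ∧ IsBalanced p.2.2 ∧
        p.1.count true + p.2.1.count true + p.2.2.count true = n ∧
        ((p.2.1.getLast? = some false ∧ p.2.2 ≠ [] ∧ WeaklyBelow p.2.2) ∨
          (p.2.1.getLast? = some true ∧ p.2.2 ≠ [] ∧ WeaklyAbove p.2.2))} =
    Nat.card {p : UDPath × UDPath × UDPath //
        IsBalanced p.1 ∧ IsBalanced p.2.1 ∧ IsBalanced p.2.2 ∧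
        p.1.count true + p.2.1.count true + p.2.2.count true = n ∧
        p.2.1 = [] ∧ HasPointAbove p.2.2 ∧ HasPointBelow p.2.2} := by
  apply Nat.card_congr
  refine Equiv.ofBijective
    (fun p => ⟨(p.1.1, ([], p.1.2.1 ++ p.1.2.2)), CS.f_mem n p.1 p.2⟩) ⟨?_, ?_⟩
  · -- injective
    rintro ⟨⟨A, B, C⟩, hA, hB, hC, hcnt, hcase⟩ ⟨⟨A', B', C'⟩, hA', hB', hC', hcnt', hcase'⟩ hpq
    simp only [Subtype.mk.injEq, Prod.mk.injEq] at hpq ⊢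
    obtain ⟨hAA, -, hD⟩ := hpq
    have hlen : B.length = B'.length := by
      rcases hcase with ⟨h1, h2, h3⟩ | ⟨h1, h2, h3⟩ <;>
        rcases hcase' with ⟨h1', h2', h3'⟩ | ⟨h1', h2', h3'⟩
      · obtain ⟨-, hle, hp3, hp4, -, -⟩ := CS.forward1 hB hC h1 h2 h3
        obtain ⟨-, hle', hp3', hp4', -, -⟩ := CS.forward1 hB' hC' h1' h2' h3'
        rw [← hD] at hle' hp3' hp4'
        exact CS.split_unique hle hp3 hp4 hle' hp3' hp4'
      · obtain ⟨hl, -, -, -, -, -⟩ := CS.forward1 hB hC h1 h2 h3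
        obtain ⟨hl', -, -, -, -, -⟩ := CS.forward2 hB' hC' h1' h2' h3'
        rw [← hD] at hl'
        rw [hl] at hl'
        simp at hl'
      · obtain ⟨hl, -, -, -, -, -⟩ := CS.forward2 hB hC h1 h2 h3
        obtain ⟨hl', -, -, -, -, -⟩ := CS.forward1 hB' hC' h1' h2' h3'
        rw [← hD] at hl'
        rw [hl] at hl'
        simp at hl'
      · obtain ⟨-, hle, hp3, hp4, -, -⟩ := CS.forward2 hB hC h1 h2 h3
        obtain ⟨-, hle', hp3', hp4', -, -⟩ := CS.forward2 hB' hC' h1' h2' h3'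
        rw [← hD] at hle' hp3' hp4'
        exact CS.split_unique' hle hp3 hp4 hle' hp3' hp4'
    have hBB : B = B' := by
      have h1 : B = (B ++ C).take B.length := List.take_left.symm
      have h2 : B' = (B' ++ C').take B'.length := List.take_left.symm
      rw [h1, h2, hD, hlen]
    refine ⟨hAA, hBB, ?_⟩
    rw [hBB] at hD
    exact List.append_cancel_left hD
  · -- surjective
    rintro ⟨⟨A, B0, D⟩, hA, hB0, hD, hcnt, hB0nil, hup, hdown⟩
    simp only at hB0nil hup hdown hcnt hD
    subst hB0nil
    have hne : D ≠ [] := CS.ne_nil_of_above hup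
    obtain ⟨b, hb⟩ : ∃ b, D.getLast? = some b := by
      cases hl : D.getLast? with
      | none => exact absurd (List.getLast?_eq_none_iff.mp hl) hne
      | some b => exact ⟨b, rfl⟩
    cases b
    · -- D ends with a down step
      obtain ⟨B, C, hsplit, hBbal, hCbal, hlastB, hCne, hwa⟩ := CS.exists_split' hD hdown hb
      refine ⟨⟨(A, (B, C)), hA, hBbal, hCbal, ?_, Or.inr ⟨hlastB, hCne, hwa⟩⟩, ?_⟩
      · have := congrArg (List.count true) hsplit
        rw [List.count_append] at this
        simp only
        simp at hcnt
        omega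
      · apply Subtype.ext
        simp only [Prod.mk.injEq]
        exact ⟨trivial, trivial, hsplit.symm⟩
    · -- D ends with an up step
      obtain ⟨B, C, hsplit, hBbal, hCbal, hlastB, hCne, hwb⟩ := CS.exists_split hD hup hb
      refine ⟨⟨(A, (B, C)), hA, hBbal, hCbal, ?_, Or.inl ⟨hlastB, hCne, hwb⟩⟩, ?_⟩
      · have := congrArg (List.count true) hsplit
        rw [List.count_append] at this
        simp only
        simp at hcnt
        omega
      · apply Subtype.ext
        simp only [Prod.mk.injEq]
        exact ⟨trivial, trivial, hsplit.symm⟩
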